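/- Let P(T) = qT^2 + (h-(q+1))T + 1 with q a prime power and h a positive integer satisfying |h-(q+1)| ≤ 2√q. Then both roots of P have absolute value q^{-1/2}. -/

import Mathlib

/-- if the class number `h` of an elliptic function field over `𝔽_q` satisfies
the Hasse bound `|h-(q+1)| ≤ 2√q`, then every root of the zeta numerator
`P(T) = qT² + (h-(q+1))T + 1` has absolute value `q^{-1/2}` (the Riemann hypothesis). -/
theorem riemann_hypothesis_elliptic (q h : ℕ) (hq : IsPrimePow q) (hh : 0 < h)
    (hasse : |(h : ℝ) - ((q : ℝ) + 1)| ≤ 2 * Real.sqrt q) :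
    ∀ z : ℂ, (q : ℂ) * z ^ 2 + ((h : ℂ) - ((q : ℂ) + 1)) * z + 1 = 0 →
      ‖z‖ = (Real.sqrt q)⁻¹ := by
  intro z hz
  have hq0 : 0 < (q : ℝ) := by exact_mod_cast hq.pos
  set a : ℝ := (h : ℝ) - ((q : ℝ) + 1) with ha
  set x : ℝ := z.re
  set y : ℝ := z.im
  have h1 : (q : ℝ) * (x * x - y * y) + a * x + 1 = 0 := by
    have := congrArg Complex.re hz
    simp [pow_two, Complex.mul_re, Complex.add_re, Complex.sub_re, x, y, a] at this
    ring_nf at this ⊢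
    linarith [this]
  have h2 : y * (2 * (q : ℝ) * x + a) = 0 := by
    have := congrArg Complex.im hz
    simp [pow_two, Complex.mul_im, Complex.add_im, Complex.sub_im, x, y, a] at this
    ring_nf at this ⊢
    linarith [this]
  have hsq : a ^ 2 ≤ 4 * (q : ℝ) := by
    have h4 : (2 * Real.sqrt q) ^ 2 = 4 * (q : ℝ) := by
      rw [mul_pow, Real.sq_sqrt hq0.le]; ring
    calc a ^ 2 = |a| ^ 2 := (sq_abs a).symm
    _ ≤ (2 * Real.sqrt q) ^ 2 := by
        apply pow_le_pow_left₀ (abs_nonneg a) hasse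
    _ = 4 * (q : ℝ) := h4
  have key : 2 * (q : ℝ) * x + a = 0 := by
    rcases mul_eq_zero.mp h2 with hy | h2'
    · have h1' : (q : ℝ) * (x * x) + a * x + 1 = 0 := by
        rw [hy] at h1; linarith [h1]
      have heq : (2 * (q : ℝ) * x + a) ^ 2 = a ^ 2 - 4 * q := by
        linear_combination (4 * (q : ℝ)) * h1'
      have hle : (2 * (q : ℝ) * x + a) ^ 2 ≤ 0 := by rw [heq]; linarith
      nlinarith [sq_nonneg (2 * (q : ℝ) * x + a)]
    · exact h2'
  have hxy : x ^ 2 + y ^ 2 = ((q : ℝ))⁻¹ := by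
    field_simp
    nlinarith [h1, key]
  have : ‖z‖ = Real.sqrt (x ^ 2 + y ^ 2) := by
    rw [Complex.norm_def, Complex.normSq_apply]; ring_nf; rfl
  rw [this, hxy, ← Real.sqrt_inv]
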